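/- Let H, G be groups of agents, φ a formula not containing the variable x, and suppose each strategy profile for H occurring in I(E,Σ) occurs at some point. Then Γ, I(E,Σ), (r,m) ⊨ ∃x C_G(σ(H) ≈ x → φ) if and only if there exists a joint strategy profile α_H for H occurring in some run of I(E,Σ) such that for all points (r',m') with (r',m') ∼^C_G (r,m) at which the agents in H are using profile α_H, Γ[g/x], I(E,Σ), (r',m') ⊨ φ holds, where g is any global state with σ(H)-components equal to α_H. -/

import Mathlib

/-- Syntax of extended temporal epistemic logic ETL(Ag, Pp, Var). -/
inductive Fml (Ag Pp Var : Type) : Type where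
  | atom : Pp → Fml Ag Pp Var
  | neg  : Fml Ag Pp Var → Fml Ag Pp Var
  | or   : Fml Ag Pp Var → Fml Ag Pp Var → Fml Ag Pp Var
  | all  : Fml Ag Pp Var → Fml Ag Pp Var
  | next : Fml Ag Pp Var → Fml Ag Pp Var
  | until_ : Fml Ag Pp Var → Fml Ag Pp Var → Fml Ag Pp Var
  | exG  : Var → Fml Ag Pp Var → Fml Ag Pp Var
  | lid  : Ag → Var → Fml Ag Pp Var
  | dk   : Set Ag → Fml Ag Pp Var → Fml Ag Pp Var
  | ck   : Set Ag → Fml Ag Pp Var → Fml Ag Pp Var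

namespace Fml
variable {Ag Pp Var : Type}

def and (φ ψ : Fml Ag Pp Var) : Fml Ag Pp Var := .neg (.or (.neg φ) (.neg ψ))
def impl (φ ψ : Fml Ag Pp Var) : Fml Ag Pp Var := .or (.neg φ) ψ

/-- Free variables of a formula. -/
def FV : Fml Ag Pp Var → Set Var
  | atom _ => ∅
  | neg φ => FV φ
  | or φ ψ => FV φ ∪ FV ψ
  | all φ => FV φ
  | next φ => FV φ
  | until_ φ ψ => FV φ ∪ FV ψ
  | exG x φ => FV φ \ {x}
  | lid _ x => {x}
  | dk _ φ => FV φ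
  | ck _ φ => FV φ

end Fml

section Semantics

variable {Ag Pp Var GS : Type} {L : Ag → Type} [DecidableEq Var]

/-- Satisfaction relation `Γ, I, (r,m) ⊨ φ` for an interpreted system whose runs are the
set `R` of maps `ℕ → GS`, with local-state projections `loc` and valuation `val`. -/
def Sat (loc : ∀ a : Ag, GS → L a) (R : Set (ℕ → GS)) (val : (ℕ → GS) → ℕ → Set Pp) :
    (Var → GS) → {r : ℕ → GS // r ∈ R} → ℕ → Fml Ag Pp Var → Prop
  | _, r, m, .atom p => p ∈ val r.1 m
  | Γ, r, m, .neg φ => ¬ Sat loc R val Γ r m φ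
  | Γ, r, m, .or φ ψ => Sat loc R val Γ r m φ ∨ Sat loc R val Γ r m ψ
  | Γ, r, m, .all φ =>
      ∀ r' : {r : ℕ → GS // r ∈ R}, (∀ k, k ≤ m → r'.1 k = r.1 k) → Sat loc R val Γ r' m φ
  | Γ, r, m, .next φ => Sat loc R val Γ r (m + 1) φ
  | Γ, r, m, .until_ φ ψ =>
      ∃ m', m ≤ m' ∧ Sat loc R val Γ r m' ψ ∧ ∀ k, m ≤ k → k < m' → Sat loc R val Γ r k φ
  | Γ, r, m, .exG x φ =>
      ∃ (r' : {r : ℕ → GS // r ∈ R}) (m' : ℕ),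
        Sat loc R val (Function.update Γ x (r'.1 m')) r m φ
  | Γ, r, m, .lid i x => loc i (r.1 m) = loc i (Γ x)
  | Γ, r, m, .dk G φ =>
      ∀ (r' : {r : ℕ → GS // r ∈ R}) (m' : ℕ),
        (∀ i ∈ G, loc i (r'.1 m') = loc i (r.1 m)) → Sat loc R val Γ r' m' φ
  | Γ, r, m, .ck G φ =>
      ∀ p' : {r : ℕ → GS // r ∈ R} × ℕ,
        Relation.ReflTransGen
          (fun a b => ∃ i ∈ G, loc i (a.1.1 a.2) = loc i (b.1.1 b.2)) (r, m) p' →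
        Sat loc R val Γ p'.1 p'.2 φ

end Semantics

namespace Fml
variable {Ag Pp Var : Type}
/-- A valid formula (used as the unit of finite conjunctions). -/
def tt (i0 : Ag) (x : Var) : Fml Ag Pp Var := .or (.lid i0 x) (.neg (.lid i0 x))
/-- Finite conjunction of a list of formulas (with a given unit). -/
def bigConj (base : Fml Ag Pp Var) (fs : List (Fml Ag Pp Var)) : Fml Ag Pp Var :=
  fs.foldr Fml.and base
end Fml

/-- An environment for agents `Ag`, with states `S`, actions `Act i`, local states `L i`. -/
structure Env (Ag S : Type) (Act L : Ag → Type) (Pp : Type) where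
  init : Set S
  trans : S → (∀ i, Act i) → S → Prop
  obs : ∀ i : Ag, S → L i
  val : S → Set Pp

/-- A strategy: a nonempty set of enabled actions at each state. -/
def Strat (S A : Type) : Type := {f : S → Set A // ∀ s, (f s).Nonempty}

/-- Global states of the strategy space system `I(E,Σ)`. -/
structure GSS (Ag S : Type) (Act L : Ag → Type) : Type where
  env : S
  loc : ∀ i : Ag, L i
  str : ∀ i : Ag, Strat S (Act i)

variable {Ag S : Type} {Act L : Ag → Type} {Pp : Type}

/-- The four run constraints of the strategy space system `I(E,Σ)`. -/
def IsRun (E : Env Ag S Act L Pp) (Sig : Set (∀ i, Strat S (Act i)))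
    (r : ℕ → GSS Ag S Act L) : Prop :=
  ((r 0).env ∈ E.init ∧ (fun i => (r 0).str i) ∈ Sig) ∧
  (∀ m i, (r m).loc i = E.obs i (r m).env) ∧
  (∀ m, ∃ a : ∀ i, Act i,
      E.trans (r m).env a (r (m + 1)).env ∧ ∀ j, a j ∈ ((r m).str j).1 (r m).env) ∧
  (∀ m i, (r (m + 1)).str i = (r m).str i)

/-- Agents of the strategy space system: ordinary agents, strategic agents `σ(i)`,
and the environment agent `e`. -/
inductive AgE (Ag : Type) : Type where
  | ag : Ag → AgE Ag
  | sg : Ag → AgE Ag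
  | env : AgE Ag

/-- Local state types of the extended agents. -/
def LExt (Ag S : Type) (Act L : Ag → Type) : AgE Ag → Type
  | .ag i => L i
  | .sg i => Strat S (Act i)
  | .env => S

/-- Local state projections of the strategy space system: agent `i` sees its local
state, `σ(i)` sees agent `i`'s strategy, and `e` sees the state of the environment. -/
def locE {Ag S : Type} {Act L : Ag → Type} :
    ∀ a : AgE Ag, GSS Ag S Act L → LExt Ag S Act L a
  | .ag i, g => g.loc i
  | .sg i, g => g.str i
  | .env, g => g.env

/-- The valuation of `I(E,Σ)`, inherited from the environment. -/
def valE {Ag S : Type} {Act L : Ag → Type} {Pp : Type} (E : Env Ag S Act L Pp) :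
    (ℕ → GSS Ag S Act L) → ℕ → Set Pp :=
  fun r m => E.val (r m).env

section Aux

variable {Ag' Pp' Var' GS' : Type} {L' : Ag' → Type} [DecidableEq Var']

lemma Sat_congr (loc : ∀ a : Ag', GS' → L' a) (R : Set (ℕ → GS'))
    (val : (ℕ → GS') → ℕ → Set Pp') (φ : Fml Ag' Pp' Var') :
    ∀ (Γ Γ' : Var' → GS') (r : {r : ℕ → GS' // r ∈ R}) (m : ℕ),
      (∀ v ∈ φ.FV, Γ v = Γ' v) →
      (Sat loc R val Γ r m φ ↔ Sat loc R val Γ' r m φ) := by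
  induction φ with
  | atom p => intro Γ Γ' r m _; rfl
  | neg φ ih =>
      intro Γ Γ' r m h
      simpa only [Sat] using not_congr (ih Γ Γ' r m h)
  | or φ ψ ih1 ih2 =>
      intro Γ Γ' r m h
      simp only [Sat]
      exact or_congr (ih1 Γ Γ' r m fun v hv => h v (Set.mem_union_left _ hv))
        (ih2 Γ Γ' r m fun v hv => h v (Set.mem_union_right _ hv))
  | all φ ih =>
      intro Γ Γ' r m h
      simp only [Sat]
      exact forall_congr' fun r' => imp_congr Iff.rfl (ih Γ Γ' r' m h)
  | next φ ih =>
      intro Γ Γ' r m h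
      simpa only [Sat] using ih Γ Γ' r (m + 1) h
  | until_ φ ψ ih1 ih2 =>
      intro Γ Γ' r m h
      simp only [Sat]
      refine exists_congr fun m' => and_congr_right fun _ => and_congr
        (ih2 Γ Γ' r m' fun v hv => h v (Set.mem_union_right _ hv))
        (forall_congr' fun k => imp_congr Iff.rfl (imp_congr Iff.rfl
          (ih1 Γ Γ' r k fun v hv => h v (Set.mem_union_left _ hv))))
  | exG y φ ih =>
      intro Γ Γ' r m h
      simp only [Sat]
      refine exists_congr fun r' => exists_congr fun m' => ih _ _ r m fun v hv => ?_
      by_cases hv' : v = y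
      · subst hv'; simp
      · rw [Function.update_of_ne hv', Function.update_of_ne hv']
        exact h v ⟨hv, hv'⟩
  | lid i y =>
      intro Γ Γ' r m h
      have : Γ y = Γ' y := h y rfl
      simp only [Sat, this]
  | dk Gr φ ih =>
      intro Γ Γ' r m h
      simp only [Sat]
      exact forall_congr' fun r' => forall_congr' fun m' =>
        imp_congr Iff.rfl (ih Γ Γ' r' m' h)
  | ck Gr φ ih =>
      intro Γ Γ' r m h
      simp only [Sat]
      exact forall_congr' fun p' => imp_congr Iff.rfl (ih Γ Γ' p'.1 p'.2 h)

lemma Sat_bigConj (loc : ∀ a : Ag', GS' → L' a) (R : Set (ℕ → GS'))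
    (val : (ℕ → GS') → ℕ → Set Pp') (Γ : Var' → GS') (r : {r : ℕ → GS' // r ∈ R})
    (m : ℕ) (i0 : Ag') (x : Var') (fs : List (Fml Ag' Pp' Var')) :
    Sat loc R val Γ r m (Fml.bigConj (Fml.tt i0 x) fs) ↔
      ∀ f ∈ fs, Sat loc R val Γ r m f := by
  induction fs with
  | nil =>
      simp only [Fml.bigConj, List.foldr_nil, Fml.tt, Sat, List.not_mem_nil,
        false_implies, implies_true, iff_true]
      tauto
  | cons f fs ih =>
      simp only [Fml.bigConj, List.foldr_cons, Fml.and, Sat, List.mem_cons] at *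
      constructor
      · intro h g hg
        rcases hg with rfl | hg
        · tauto
        · exact (ih.mp (by tauto)) g hg
      · intro h
        have h1 := h f (Or.inl rfl)
        have h2 := ih.mpr fun g hg => h g (Or.inr hg)
        tauto

end Aux

/-- Characterization of `∃x C_G(σ(H) ≈ x → φ)` in the strategy space
system `I(E,Σ)`, where `σ(H) ≈ x` is the conjunction `⋀_{i∈H} (σ(i) ≈ x)`.  Provided
`x` is not free in `φ` and each strategy profile for `H` occurring in `I(E,Σ)` occurs
at some point, the formula holds at `(r,m)` under `Γ` iff there is a joint strategy
profile `α` for `H` occurring at some point of `I(E,Σ)` such that for all points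
`(r',m')` with `(r',m') ∼^C_G (r,m)` at which the agents in `H` use `α`,
`Γ[g/x], I(E,Σ), (r',m') ⊨ φ` holds, where `g` is any global state whose
`σ(H)`-components equal `α`. -/
theorem exists_commonly_known_strategy_characterization {Var : Type} [DecidableEq Var]
    (E : Env Ag S Act L Pp) (Sig : Set (∀ i, Strat S (Act i)))
    (G : Set Ag) (H : Finset Ag) (x : Var) (φ : Fml (AgE Ag) Pp Var)
    (hx : x ∉ φ.FV)
    (hocc : ∀ (r : {r : ℕ → GSS Ag S Act L // r ∈ {r | IsRun E Sig r}}) (m : ℕ),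
      ∃ (r' : {r : ℕ → GSS Ag S Act L // r ∈ {r | IsRun E Sig r}}) (m' : ℕ),
        ∀ i ∈ H, (r'.1 m').str i = (r.1 m).str i)
    (Γ : Var → GSS Ag S Act L)
    (r : {r : ℕ → GSS Ag S Act L // r ∈ {r | IsRun E Sig r}}) (m : ℕ) :
    Sat locE {r | IsRun E Sig r} (valE E) Γ r m
      (.exG x (.ck (AgE.ag '' G)
        (Fml.impl
          (Fml.bigConj (Fml.tt AgE.env x)
            (H.toList.map (fun i => Fml.lid (AgE.sg i) x)))
          φ))) ↔
    ∃ α : ∀ i : Ag, Strat S (Act i),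
      (∃ (r₀ : {r : ℕ → GSS Ag S Act L // r ∈ {r | IsRun E Sig r}}) (m₀ : ℕ),
        ∀ i ∈ H, (r₀.1 m₀).str i = α i) ∧
      ∀ (r' : {r : ℕ → GSS Ag S Act L // r ∈ {r | IsRun E Sig r}}) (m' : ℕ),
        Relation.ReflTransGen
          (fun a b => ∃ k ∈ AgE.ag '' G, locE k (a.1.1 a.2) = locE k (b.1.1 b.2))
          (r', m') (r, m) →
        (∀ i ∈ H, (r'.1 m').str i = α i) →
        ∀ g : GSS Ag S Act L, (∀ i ∈ H, g.str i = α i) →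
          Sat locE {r | IsRun E Sig r} (valE E) (Function.update Γ x g) r' m' φ := by
  have hsym : Symmetric (fun a b : {r : ℕ → GSS Ag S Act L // r ∈ {r | IsRun E Sig r}} × ℕ =>
      ∃ k ∈ AgE.ag '' G, locE k (a.1.1 a.2) = locE k (b.1.1 b.2)) := by
    rintro a b ⟨k, hk, heq⟩; exact ⟨k, hk, heq.symm⟩
  have hsymRT := fun {a b : {r : ℕ → GSS Ag S Act L // r ∈ {r | IsRun E Sig r}} × ℕ}
      (h : Relation.ReflTransGen (fun a b : {r : ℕ → GSS Ag S Act L // r ∈ {r | IsRun E Sig r}} × ℕ =>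
        ∃ k ∈ AgE.ag '' G, locE k (a.1.1 a.2) = locE k (b.1.1 b.2)) a b) =>
    (@Relation.ReflTransGen.stdSymm _ _ ⟨fun _ _ h' => hsym h'⟩).symm a b h
  constructor
  · rintro ⟨r₀, m₀, hsat⟩
    refine ⟨fun i => (r₀.1 m₀).str i, ⟨r₀, m₀, fun i _ => rfl⟩, ?_⟩
    intro r' m' hrel hstr g hg
    have h1 := hsat (r', m') (hsymRT hrel)
    simp only [Sat, Fml.impl] at h1
    have hbig : Sat locE {r | IsRun E Sig r} (valE E)
        (Function.update Γ x (r₀.1 m₀)) r' m'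
        (Fml.bigConj (Fml.tt AgE.env x)
          (H.toList.map (fun i => Fml.lid (AgE.sg i) x))) := by
      rw [Sat_bigConj]
      intro f hf
      rcases List.mem_map.mp hf with ⟨i, hi, rfl⟩
      have hiH : i ∈ H := Finset.mem_toList.mp hi
      show locE (AgE.sg i) (r'.1 m') = locE (AgE.sg i) (Function.update Γ x (r₀.1 m₀) x)
      simp only [Function.update_self, locE]
      exact hstr i hiH
    rcases h1 with h1 | h1
    · exact absurd hbig h1
    · refine (Sat_congr locE {r | IsRun E Sig r} (valE E) φ _ _ r' m' ?_).mp h1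
      intro v hv
      have hvx : v ≠ x := fun h => hx (h ▸ hv)
      rw [Function.update_of_ne hvx, Function.update_of_ne hvx]
  · rintro ⟨α, ⟨r₀, m₀, h0⟩, hφ⟩
    refine ⟨r₀, m₀, ?_⟩
    intro p' hrel
    simp only [Sat, Fml.impl]
    by_cases hbig : Sat locE {r | IsRun E Sig r} (valE E)
        (Function.update Γ x (r₀.1 m₀)) p'.1 p'.2
        (Fml.bigConj (Fml.tt AgE.env x)
          (H.toList.map (fun i => Fml.lid (AgE.sg i) x)))
    · right
      have hstr : ∀ i ∈ H, (p'.1.1 p'.2).str i = α i := by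
        intro i hiH
        have := (Sat_bigConj _ _ _ _ _ _ _ _ _).mp hbig
          (Fml.lid (AgE.sg i) x)
          (List.mem_map.mpr ⟨i, Finset.mem_toList.mpr hiH, rfl⟩)
        simp only [Sat, Function.update_self, locE] at this
        rw [this]; exact h0 i hiH
      exact hφ p'.1 p'.2 (hsymRT hrel) hstr (r₀.1 m₀) h0
    · left; exact hbig
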